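/- (SMD identity with time-varying step sizes.) For any differentiable models f_i : ℝ^m → ℝ, any differentiable loss l, any parameter w and noise values v_i with y_i = f_i(w) + v_i for i = 1, …, T, any initialization w_0, any positive step-size sequence {η_i}, and any T ≥ 1, the time-varying SMD iterates satisfy D_ψ(w, w_0) + Σ_{i=1}^T η_i l(v_i) = D_ψ(w, w_T) + Σ_{i=1}^T ( E_i(w_i, w_{i−1}) + η_i D_{L_i}(w, w_{i−1}) ), where E_i(w_i, w_{i−1}) := D_ψ(w_i, w_{i−1}) − η_i D_{L_i}(w_i, w_{i−1}) + η_i L_i(w_i). -/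
import Mathlib


open scoped RealInnerProductSpace

/-- Bregman-divergence-like quantity `D_g(u, u') = g(u) - g(u') - ∇g(u')ᵀ(u - u')` of a
(not necessarily convex) function `g`. -/
noncomputable def Dbreg {m : ℕ} (g : EuclideanSpace ℝ (Fin m) → ℝ)
    (u u' : EuclideanSpace ℝ (Fin m)) : ℝ :=
  g u - g u' - ⟪gradient g u', u - u'⟫

/-- fundamental telescoped identity for SMD with time-varying step
sizes `η_i > 0`: the iterates satisfy `∇ψ(w_i) = ∇ψ(w_{i-1}) - η_i ∇L_i(w_{i-1})`. -/
theorem stmt_18 {m : ℕ} (T : ℕ) (hT : 1 ≤ T) (y : ℕ → ℝ)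
    (f : ℕ → EuclideanSpace ℝ (Fin m) → ℝ) (hf : ∀ i, Differentiable ℝ (f i))
    (l : ℝ → ℝ) (hl : Differentiable ℝ l)
    (ψ : EuclideanSpace ℝ (Fin m) → ℝ) (hψ : Differentiable ℝ ψ)
    (hψconv : StrictConvexOn ℝ Set.univ ψ)
    (L : ℕ → EuclideanSpace ℝ (Fin m) → ℝ)
    (hLdef : ∀ i u, L i u = l (y i - f i u))
    (η : ℕ → ℝ) (hη : ∀ i, 0 < η i)
    (w₀ : EuclideanSpace ℝ (Fin m))
    (w : ℕ → EuclideanSpace ℝ (Fin m)) (hw0 : w 0 = w₀)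
    (hupd : ∀ i : ℕ,
      gradient ψ (w (i + 1)) =
        gradient ψ (w i) - η (i + 1) • gradient (L (i + 1)) (w i))
    (wstar : EuclideanSpace ℝ (Fin m)) (v : ℕ → ℝ)
    (hdata : ∀ i : ℕ, y (i + 1) = f (i + 1) wstar + v (i + 1)) :
    Dbreg ψ wstar w₀ + ∑ i ∈ Finset.range T, η (i + 1) * l (v (i + 1)) =
      Dbreg ψ wstar (w T)
        + ∑ i ∈ Finset.range T,
            ((Dbreg ψ (w (i + 1)) (w i)
                - η (i + 1) * Dbreg (L (i + 1)) (w (i + 1)) (w i)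
                + η (i + 1) * L (i + 1) (w (i + 1)))
              + η (i + 1) * Dbreg (L (i + 1)) wstar (w i)) := by
  have step : ∀ i : ℕ,
      Dbreg ψ wstar (w i) + η (i + 1) * l (v (i + 1)) =
        Dbreg ψ wstar (w (i + 1))
          + ((Dbreg ψ (w (i + 1)) (w i)
                - η (i + 1) * Dbreg (L (i + 1)) (w (i + 1)) (w i)
                + η (i + 1) * L (i + 1) (w (i + 1)))
              + η (i + 1) * Dbreg (L (i + 1)) wstar (w i)) := by
    intro i
    have hLv : L (i + 1) wstar = l (v (i + 1)) := by
      rw [hLdef, hdata]; ring_nf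
    simp only [Dbreg, hupd i, inner_sub_left, real_inner_smul_left, inner_sub_right,
      ← hLv]
    ring
  clear hT
  induction T with
  | zero => simp [hw0]
  | succ n ih =>
      rw [Finset.sum_range_succ, Finset.sum_range_succ, ← add_assoc, ih]
      linarith [step n]
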